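/- arXiv:1908.00964 — 2 statements merged into one kernel-verified Lean document; each statement's English description precedes it below -/
import Mathlib

section
/- Let n, m be natural numbers with m ≤ n(n-1)/2. Then log (binom(n(n-1)/2, m)) ≤ m · log n + n · s(2m/n), where s(x) = x/2 - (x/2)·log x for x > 0 and s(0) = 0. In particular, log (binom(n(n-1)/2, m)) ≤ m · log n + n/2. -/
/-- The function `s(x) = x/2 - (x/2)·log x` for `x > 0`, with `s(0) = 0`. -/
noncomputable def sFun (x : ℝ) : ℝ := if x = 0 then 0 else x / 2 - x / 2 * Real.log x

lemma sFun_le_half {x : ℝ} (hx : 0 ≤ x) : sFun x ≤ 1 / 2 := by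
  unfold sFun
  split_ifs with h
  · norm_num
  · have hx' : 0 < x := lt_of_le_of_ne hx (Ne.symm h)
    have h1 : Real.log x⁻¹ ≤ x⁻¹ - 1 := Real.log_le_sub_one_of_pos (by positivity)
    rw [Real.log_inv] at h1
    -- -log x ≤ 1/x - 1, multiply by x > 0
    nlinarith [mul_le_mul_of_nonneg_left h1 hx'.le, mul_inv_cancel₀ (ne_of_gt hx')]

lemma log_factorial_ge (m : ℕ) : (m : ℝ) * Real.log m - m ≤ Real.log (m.factorial) := by
  induction m with
  | zero => simp
  | succ m ih =>
    rw [Nat.factorial_succ, Nat.cast_mul, Real.log_mul (by positivity)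
      (by exact_mod_cast m.factorial_ne_zero)]
    have key : (m : ℝ) * Real.log (m + 1) - (m : ℝ) * Real.log m ≤ 1 := by
      rcases Nat.eq_zero_or_pos m with hm | hm
      · subst hm; simp
      · have hm' : (0 : ℝ) < m := by exact_mod_cast hm
        have h1 : Real.log ((m + 1) / m) ≤ (m + 1) / m - 1 :=
          Real.log_le_sub_one_of_pos (by positivity)
        rw [Real.log_div (by positivity) (ne_of_gt hm')] at h1
        have h2 : ((m : ℝ) + 1) / m - 1 = 1 / m := by field_simp; ring
        rw [h2] at h1
        have := mul_le_mul_of_nonneg_left h1 hm'.le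
        have h3 : (m : ℝ) * (1 / m) = 1 := by field_simp
        rw [mul_sub, h3] at this
        linarith
    push_cast
    nlinarith [key, ih]

/-- If `m ≤ n(n-1)/2`, then `log (binom(n(n-1)/2, m)) ≤ m·log n + n·s(2m/n)`, and in
particular `log (binom(n(n-1)/2, m)) ≤ m·log n + n/2`. -/
theorem log_choose_le (n m : ℕ) (h : m ≤ n * (n - 1) / 2) :
    Real.log ((n * (n - 1) / 2).choose m : ℝ) ≤
        (m : ℝ) * Real.log n + (n : ℝ) * sFun (2 * (m : ℝ) / (n : ℝ)) ∧
      Real.log ((n * (n - 1) / 2).choose m : ℝ) ≤ (m : ℝ) * Real.log n + (n : ℝ) / 2 := by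
  have main : Real.log ((n * (n - 1) / 2).choose m : ℝ) ≤
      (m : ℝ) * Real.log n + (n : ℝ) * sFun (2 * (m : ℝ) / (n : ℝ)) := by
    rcases Nat.eq_zero_or_pos m with hm | hm
    · subst hm
      simp [sFun]
    · -- m ≥ 1, hence N ≥ 1 and n ≥ 2
      set N := n * (n - 1) / 2 with hN
      have hNpos : 0 < N := lt_of_lt_of_le hm h
      have hn2 : 2 ≤ n := by
        by_contra hc
        interval_cases n <;> simp_all [hN]
      have hnR : (1 : ℝ) < n := by exact_mod_cast lt_of_lt_of_le one_lt_two hn2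
      have hmR : (0 : ℝ) < m := by exact_mod_cast hm
      -- bound (N : ℝ) ≤ n^2 / 2
      have hNle : (N : ℝ) ≤ (n : ℝ) ^ 2 / 2 := by
        have h1 : (N : ℝ) ≤ (n * (n - 1) : ℕ) / 2 := by
          rw [hN]
          exact_mod_cast Nat.cast_div_le
        refine h1.trans ?_
        have hnat : (n * (n - 1) : ℕ) ≤ n ^ 2 := by
          calc n * (n - 1) ≤ n * n := Nat.mul_le_mul_left n (Nat.sub_le n 1)
            _ = n ^ 2 := (sq n).symm
        have : ((n * (n - 1) : ℕ) : ℝ) ≤ (n : ℝ) ^ 2 := by exact_mod_cast hnat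
        linarith
      -- choose bound
      have hchoose : ((N.choose m : ℕ) : ℝ) ≤ (N : ℝ) ^ m / (m.factorial : ℝ) := by
        exact_mod_cast Nat.choose_le_pow_div m N
      have hcpos : (0 : ℝ) < (N.choose m : ℕ) := by
        exact_mod_cast Nat.choose_pos h
      have hlog1 : Real.log ((N.choose m : ℕ) : ℝ) ≤
          (m : ℝ) * Real.log N - Real.log (m.factorial) := by
        calc Real.log ((N.choose m : ℕ) : ℝ) ≤ Real.log ((N : ℝ) ^ m / (m.factorial : ℝ)) :=
              Real.log_le_log hcpos hchoose
          _ = (m : ℝ) * Real.log N - Real.log (m.factorial) := by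
              rw [Real.log_div (by positivity) (by exact_mod_cast m.factorial_ne_zero),
                Real.log_pow]
      have hlogN : Real.log (N : ℝ) ≤ 2 * Real.log n - Real.log 2 := by
        have := Real.log_le_log (by exact_mod_cast hNpos) hNle
        rwa [Real.log_div (by positivity) (by norm_num), Real.log_pow] at this
      have hfact := log_factorial_ge m
      -- compute RHS
      have hxpos : (0 : ℝ) < 2 * (m : ℝ) / n := by positivity
      have hs : (n : ℝ) * sFun (2 * (m : ℝ) / n) =
          (m : ℝ) - (m : ℝ) * (Real.log 2 + Real.log m - Real.log n) := by
        unfold sFun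
        rw [if_neg (ne_of_gt hxpos)]
        have hne : (n : ℝ) ≠ 0 := by positivity
        have hlx : Real.log (2 * (m : ℝ) / n) = Real.log 2 + Real.log m - Real.log n := by
          rw [Real.log_div (by positivity) hne, Real.log_mul (by norm_num) (ne_of_gt hmR)]
        rw [hlx]
        field_simp
      rw [hs]
      have : (m : ℝ) * Real.log N ≤ (m : ℝ) * (2 * Real.log n - Real.log 2) :=
        mul_le_mul_of_nonneg_left hlogN hmR.le
      nlinarith [this, hfact, hlog1]
  refine ⟨main, main.trans ?_⟩
  have hs := sFun_le_half (x := 2 * (m : ℝ) / n) (by positivity)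
  have := mul_le_mul_of_nonneg_left hs (Nat.cast_nonneg (α := ℝ) n)
  linarith
end

section
/- Let Ξ and Θ be finite sets. Fix n ∈ ℕ, a symmetric edge mark count vector m = (m(x,x'))_{x,x' ∈ Ξ} of nonnegative integers with m(x,x') = m(x',x), and a vertex mark count vector u = (u(θ))_{θ ∈ Θ} of nonnegative integers. Suppose Σ_{x ≤ x'} m(x,x') ≤ binom(n,2) and Σ_θ u(θ) = n. Then the number of simple marked graphs on vertex set {1,…,n} with edge mark count vector m and vertex mark count vector u equals (n! / Π_θ u(θ)!) · ((n(n-1)/2)! / (Π_{x ≤ x'} m(x,x')! · (n(n-1)/2 - Σ_{x≤x'} m(x,x'))!)) · 2^{Σ_{x < x'} m(x,x')}. -/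
open Finset Equiv

lemma myNat_card_sigma {ι : Type*} [Fintype ι] (X : ι → Type*) [∀ i, Finite (X i)] :
    Nat.card (Σ i, X i) = ∑ i, Nat.card (X i) := by
  have inst : ∀ i, Fintype (X i) := fun i => Fintype.ofFinite _
  rw [Nat.card_eq_fintype_card, Fintype.card_sigma]
  exact Finset.sum_congr rfl fun i _ => (Nat.card_eq_fintype_card).symm

/-- fiber of `Sigma.fst` -/
def fiberFstEquiv {L : Type*} (π : L → Type*) (ℓ : L) : {p : Σ i, π i // p.1 = ℓ} ≃ π ℓ where
  toFun p := cast (congrArg π p.2) p.1.2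
  invFun x := ⟨⟨ℓ, x⟩, rfl⟩
  left_inv := by rintro ⟨⟨i, x⟩, rfl⟩; rfl
  right_inv x := rfl

lemma count_fun_fibers {α L : Type*} [Fintype α] [DecidableEq α] [Fintype L] [DecidableEq L]
    (c : L → ℕ) (hc : ∑ ℓ, c ℓ = Fintype.card α) :
    Nat.card {f : α → L // ∀ ℓ, Nat.card {a // f a = ℓ} = c ℓ} * ∏ ℓ, (c ℓ).factorial
      = (Fintype.card α).factorial := by
  classical
  obtain ⟨e⟩ : Nonempty (α ≃ Σ ℓ, Fin (c ℓ)) := by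
    refine ⟨Fintype.equivOfCardEq ?_⟩
    rw [Fintype.card_sigma]
    simp [hc]
  set f₀ : α → L := fun a => (e a).1 with hf₀
  have h₀ : ∀ ℓ, Nat.card {a // f₀ a = ℓ} = c ℓ := by
    intro ℓ
    have e1 : {a // f₀ a = ℓ} ≃ {p : Σ ℓ, Fin (c ℓ) // p.1 = ℓ} :=
      e.subtypeEquiv (fun a => Iff.rfl)
    rw [Nat.card_congr (e1.trans (fiberFstEquiv _ ℓ)), Nat.card_eq_fintype_card,
      Fintype.card_fin]
  set T := {f : α → L // ∀ ℓ, Nat.card {a // f a = ℓ} = c ℓ} with hT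
  have hΦmem : ∀ σ : Perm α, ∀ ℓ, Nat.card {a // (f₀ ∘ σ) a = ℓ} = c ℓ := by
    intro σ ℓ
    rw [← h₀ ℓ]
    exact Nat.card_congr (σ.subtypeEquiv (fun a => Iff.rfl))
  set Φ : Perm α → T := fun σ => ⟨f₀ ∘ σ, hΦmem σ⟩ with hΦ
  have fibcard : ∀ f : T, Nat.card {σ : Perm α // Φ σ = f} = ∏ ℓ, (c ℓ).factorial := by
    intro f
    have gl : ∀ ℓ, {a // f.1 a = ℓ} ≃ {a // f₀ a = ℓ} := by
      intro ℓ
      have : Fintype.card {a // f.1 a = ℓ} = Fintype.card {a // f₀ a = ℓ} := by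
        rw [← Nat.card_eq_fintype_card, ← Nat.card_eq_fintype_card, f.2 ℓ, h₀ ℓ]
      exact Fintype.equivOfCardEq this
    set σf : Perm α :=
      ((sigmaFiberEquiv f.1).symm.trans ((Equiv.sigmaCongrRight gl).trans
        (sigmaFiberEquiv f₀))) with hσf
    have hσfspec : ∀ a, f₀ (σf a) = f.1 a := by
      intro a
      exact (gl (f.1 a) ⟨a, rfl⟩).2
    have key : {σ : Perm α // Φ σ = f} ≃ {g : Perm α // f₀ ∘ g = f₀} := by
      refine ⟨fun σ => ⟨σf.symm.trans σ.1, ?_⟩, fun g => ⟨σf.trans g.1, ?_⟩, ?_, ?_⟩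
      · have hσ : f₀ ∘ σ.1 = f.1 := congrArg Subtype.val σ.2
        funext a
        have : f₀ (σ.1 (σf.symm a)) = f.1 (σf.symm a) := congrFun hσ _
        simp only [Function.comp, trans_apply, this]
        rw [← hσfspec (σf.symm a)]
        simp
      · apply Subtype.ext
        funext a
        have := congrFun g.2 (σf a)
        simpa [Φ, Function.comp, hσfspec a] using this
      · intro σ; apply Subtype.ext; apply Equiv.ext; intro a; simp
      · intro g; apply Subtype.ext; apply Equiv.ext; intro a; simp
    rw [Nat.card_congr key, Nat.card_eq_fintype_card, DomMulAct.stabilizer_card]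
    refine Finset.prod_congr rfl fun ℓ _ => ?_
    rw [← Nat.card_eq_fintype_card, h₀ ℓ]
  have total : Nat.card (Perm α) = Nat.card T * ∏ ℓ, (c ℓ).factorial := by
    rw [← Nat.card_congr (sigmaFiberEquiv Φ), myNat_card_sigma,
      Finset.sum_congr rfl (fun f _ => fibcard f), Finset.sum_const, smul_eq_mul, card_univ,
      Nat.card_eq_fintype_card]
  rw [← total, Nat.card_eq_fintype_card, Fintype.card_perm]

lemma count_labelled {S V L : Type*} [Fintype S] [DecidableEq S] [Fintype V] [DecidableEq V]
    [Fintype L] [DecidableEq L] (lab : V → L) (c : L → ℕ) (hc : ∑ ℓ, c ℓ = Fintype.card S) :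
    Nat.card {g : S → V // ∀ ℓ, Nat.card {s // lab (g s) = ℓ} = c ℓ} * ∏ ℓ, (c ℓ).factorial
      = (Fintype.card S).factorial * ∏ ℓ, (Nat.card {v // lab v = ℓ}) ^ (c ℓ) := by
  classical
  set T := {f : S → L // ∀ ℓ, Nat.card {s // f s = ℓ} = c ℓ} with hT
  set G := {g : S → V // ∀ ℓ, Nat.card {s // lab (g s) = ℓ} = c ℓ} with hG
  set Ψ : G → T := fun g => ⟨lab ∘ g.1, g.2⟩ with hΨ
  have fib : ∀ f : T, {g : G // Ψ g = f} ≃ ∀ s : S, {v // lab v = f.1 s} := by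
    intro f
    refine ⟨fun g s => ⟨g.1.1 s, ?_⟩, fun h => ⟨⟨fun s => (h s).1, ?_⟩, ?_⟩, ?_, ?_⟩
    · exact congrFun (congrArg Subtype.val g.2) s
    · intro ℓ
      rw [← f.2 ℓ]
      exact Nat.card_congr (Equiv.subtypeEquivRight fun s => by rw [(h s).2])
    · apply Subtype.ext
      funext s
      exact (h s).2
    · intro g; apply Subtype.ext; apply Subtype.ext; rfl
    · intro h; funext s; apply Subtype.ext; rfl
  have fibcard : ∀ f : T, Nat.card {g : G // Ψ g = f}
      = ∏ ℓ, (Nat.card {v // lab v = ℓ}) ^ (c ℓ) := by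
    intro f
    rw [Nat.card_congr (fib f), Nat.card_pi]
    rw [← Finset.prod_fiberwise_of_maps_to (g := f.1) (fun s _ => Finset.mem_univ _)
      (fun s => Nat.card {v // lab v = f.1 s})]
    refine Finset.prod_congr rfl fun ℓ _ => ?_
    rw [Finset.prod_congr rfl (fun s hs => ?_), Finset.prod_const]
    · congr 1
      rw [← f.2 ℓ, Nat.card_eq_fintype_card, Fintype.card_subtype]
    · rw [(Finset.mem_filter.1 hs).2]
  have total : Nat.card G = Nat.card T * ∏ ℓ, (Nat.card {v // lab v = ℓ}) ^ (c ℓ) := by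
    rw [← Nat.card_congr (sigmaFiberEquiv Ψ), myNat_card_sigma,
      Finset.sum_congr rfl (fun f _ => fibcard f), Finset.sum_const, smul_eq_mul, card_univ,
      Nat.card_eq_fintype_card]
  rw [total, mul_right_comm, count_fun_fibers c hc]

/-- sort a pair -/
def sortPair {K : ℕ} (x y : Fin K) : {q : Fin K × Fin K // q.1 ≤ q.2} :=
  if h : x ≤ y then ⟨(x, y), h⟩ else ⟨(y, x), le_of_not_ge h⟩

/-- label of a possible marked edge -/
def lab {K : ℕ} : Option (Fin K × Fin K) → Option {q : Fin K × Fin K // q.1 ≤ q.2} :=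
  Option.map fun p => sortPair p.1 p.2

lemma lab_eq_some {K : ℕ} (q : {q : Fin K × Fin K // q.1 ≤ q.2}) (v : Option (Fin K × Fin K)) :
    lab v = some q ↔ v = some (q.1.1, q.1.2) ∨ v = some (q.1.2, q.1.1) := by
  obtain ⟨⟨a, b⟩, hab⟩ := q
  cases v with
  | none => simp [lab]
  | some p =>
    obtain ⟨x, y⟩ := p
    simp only [lab, Option.map_some, Option.some.injEq, Prod.mk.injEq, sortPair]
    split_ifs with h
    · rw [Subtype.mk.injEq, Prod.mk.injEq]
      constructor
      · exact Or.inl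
      · rintro (⟨rfl, rfl⟩ | ⟨rfl, rfl⟩)
        · exact ⟨rfl, rfl⟩
        · exact ⟨le_antisymm h hab, le_antisymm hab h⟩
    · rw [Subtype.mk.injEq, Prod.mk.injEq]
      constructor
      · rintro ⟨rfl, rfl⟩
        exact Or.inr ⟨rfl, rfl⟩
      · rintro (⟨rfl, rfl⟩ | ⟨rfl, rfl⟩)
        · exact absurd hab h
        · exact ⟨rfl, rfl⟩

lemma lab_eq_none {K : ℕ} (v : Option (Fin K × Fin K)) : lab v = none ↔ v = none :=
  Option.map_eq_none_iff

lemma nat_card_pair {β : Type*} [Fintype β] [DecidableEq β] {a b : β} (h : a ≠ b) :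
    Nat.card {x : β // x = a ∨ x = b} = 2 := by
  rw [Nat.card_eq_fintype_card, Fintype.card_subtype, Finset.filter_or,
    Finset.filter_eq', Finset.filter_eq']
  simp only [Finset.mem_univ, if_true]
  rw [← Finset.insert_eq, Finset.card_insert_of_notMem (by simp [h]), Finset.card_singleton]

lemma labcard {K : ℕ} (q : {q : Fin K × Fin K // q.1 ≤ q.2}) :
    Nat.card {v : Option (Fin K × Fin K) // lab v = some q}
      = if q.1.1 = q.1.2 then 1 else 2 := by
  rw [Nat.card_congr (Equiv.subtypeEquivRight (fun v => lab_eq_some q v))]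
  split_ifs with h
  · have hiff : ∀ v : Option (Fin K × Fin K),
        (v = some (q.1.1, q.1.2) ∨ v = some (q.1.2, q.1.1)) ↔ v = some (q.1.1, q.1.2) := by
      intro v
      rw [← h]
      exact or_self_iff
    rw [Nat.card_congr (Equiv.subtypeEquivRight hiff), Nat.card_eq_fintype_card,
      Fintype.card_subtype_eq]
  · exact nat_card_pair (by simp [Prod.ext_iff]; exact fun hh _ => h hh)

/-- ordered pairs with `p.1 < p.2` -/
def ltPairEquiv (n : ℕ) : {p : Fin n × Fin n // p.1 < p.2} ≃ Σ j : Fin n, Fin j.val where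
  toFun p := ⟨p.1.2, ⟨p.1.1.val, p.2⟩⟩
  invFun x := ⟨(⟨x.2.val, lt_trans x.2.isLt x.1.isLt⟩, x.1), x.2.isLt⟩
  left_inv := by rintro ⟨⟨i, j⟩, h⟩; rfl
  right_inv := by rintro ⟨j, i⟩; rfl

lemma card_ltPair (n : ℕ) :
    Fintype.card {p : Fin n × Fin n // p.1 < p.2} = n.choose 2 := by
  rw [Fintype.card_congr (ltPairEquiv n), Fintype.card_sigma]
  simp only [Fintype.card_fin]
  rw [Fin.sum_univ_eq_sum_range (fun j => j) n, Finset.sum_range_id, Nat.choose_two_right]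


open Finset in
/-- Counting simple marked graphs on `[n]` with prescribed edge mark count vector `m`
and vertex mark count vector `u`.  A simple marked graph on `Fin n` (edge marks in
`Fin K`, vertex marks in `Fin J`) is encoded as a vertex mark function together with,
for each ordered pair of vertices `v < w`, either no edge or an edge carrying a pair of
half-marks (the first toward `v`, the second toward `w`).  The count equals
`(n!/Π u(θ)!) · ((n(n-1)/2)!/(Π_{x≤x'} m(x,x')! · (n(n-1)/2 - Σ m)!)) · 2^{Σ_{x<x'} m(x,x')}`;
the identity is stated multiplicatively (all the divisions involved are exact). -/
theorem card_marked_graphs (n K J : ℕ) (m : Fin K → Fin K → ℕ) (u : Fin J → ℕ)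
    (hmsym : ∀ x x', m x x' = m x' x)
    (hm : (∑ p ∈ univ.filter (fun p : Fin K × Fin K => p.1 ≤ p.2), m p.1 p.2) ≤ n.choose 2)
    (hu : (∑ θ, u θ) = n) :
    Nat.card {G : (Fin n → Fin J) × ({p : Fin n × Fin n // p.1 < p.2} → Option (Fin K × Fin K)) //
        (∀ θ, Nat.card {v : Fin n // G.1 v = θ} = u θ) ∧
        (∀ x x', Nat.card {p : {p : Fin n × Fin n // p.1 < p.2} //
            G.2 p = some (x, x') ∨ G.2 p = some (x', x)} = m x x')} *
      ((∏ θ, (u θ).factorial) *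
        (∏ p ∈ univ.filter (fun p : Fin K × Fin K => p.1 ≤ p.2), (m p.1 p.2).factorial) *
        (n * (n - 1) / 2 - ∑ p ∈ univ.filter (fun p : Fin K × Fin K => p.1 ≤ p.2),
          m p.1 p.2).factorial) =
    n.factorial * (n * (n - 1) / 2).factorial *
      2 ^ (∑ p ∈ univ.filter (fun p : Fin K × Fin K => p.1 < p.2), m p.1 p.2) := by
  classical
  rw [show n * (n - 1) / 2 = n.choose 2 from (Nat.choose_two_right n).symm]
  set Sm := ∑ p ∈ univ.filter (fun p : Fin K × Fin K => p.1 ≤ p.2), m p.1 p.2 with hSm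
  have hcardE : Fintype.card {p : Fin n × Fin n // p.1 < p.2} = n.choose 2 := card_ltPair n
  set c : Option {q : Fin K × Fin K // q.1 ≤ q.2} → ℕ :=
    fun ℓ => ℓ.elim (n.choose 2 - Sm) (fun q => m q.1.1 q.1.2) with hc
  have hsubsum : ∑ q : {q : Fin K × Fin K // q.1 ≤ q.2}, m q.1.1 q.1.2 = Sm :=
    (Finset.sum_subtype (univ.filter (fun p : Fin K × Fin K => p.1 ≤ p.2))
      (fun p => by simp) (fun p => m p.1 p.2)).symm
  have hsum_c : ∑ ℓ, c ℓ = Fintype.card {p : Fin n × Fin n // p.1 < p.2} := by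
    rw [Fintype.sum_option, hcardE]
    simp only [hc, Option.elim]
    rw [hsubsum]
    omega
  -- translate the edge condition into fiber counts of `lab`
  have hBiff : ∀ g : {p : Fin n × Fin n // p.1 < p.2} → Option (Fin K × Fin K),
      (∀ x x', Nat.card {p : {p : Fin n × Fin n // p.1 < p.2} //
          g p = some (x, x') ∨ g p = some (x', x)} = m x x')
      ↔ (∀ ℓ, Nat.card {p : {p : Fin n × Fin n // p.1 < p.2} // lab (g p) = ℓ} = c ℓ) := by
    intro g
    constructor
    · intro hB ℓ
      have hsome : ∀ q : {q : Fin K × Fin K // q.1 ≤ q.2},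
          Nat.card {p : {p : Fin n × Fin n // p.1 < p.2} // lab (g p) = some q}
            = m q.1.1 q.1.2 := by
        intro q
        rw [Nat.card_congr (Equiv.subtypeEquivRight (fun p => lab_eq_some q (g p)))]
        exact hB q.1.1 q.1.2
      cases ℓ with
      | some q => exact hsome q
      | none =>
        have htot : ∑ ℓ, Nat.card {p : {p : Fin n × Fin n // p.1 < p.2} // lab (g p) = ℓ}
            = Fintype.card {p : Fin n × Fin n // p.1 < p.2} := by
          rw [← myNat_card_sigma, Nat.card_congr (sigmaFiberEquiv (fun p => lab (g p))),
            Nat.card_eq_fintype_card]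
        rw [Fintype.sum_option, hcardE,
          Finset.sum_congr rfl (fun q _ => hsome q), hsubsum] at htot
        show _ = n.choose 2 - Sm
        omega
    · intro hB' x x'
      rcases le_or_gt x x' with h | h
      · have := hB' (some ⟨(x, x'), h⟩)
        rwa [Nat.card_congr
          (Equiv.subtypeEquivRight (fun p => lab_eq_some ⟨(x, x'), h⟩ (g p)))] at this
      · have := hB' (some ⟨(x', x), h.le⟩)
        rw [Nat.card_congr
          (Equiv.subtypeEquivRight (fun p => lab_eq_some ⟨(x', x), h.le⟩ (g p)))] at this
        rw [hmsym x x', Nat.card_congr (Equiv.subtypeEquivRight (fun p => or_comm))]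
        exact this
  -- split into the two independent counting problems
  have e1 : {G : (Fin n → Fin J) × ({p : Fin n × Fin n // p.1 < p.2} → Option (Fin K × Fin K)) //
        (∀ θ, Nat.card {v : Fin n // G.1 v = θ} = u θ) ∧
        (∀ x x', Nat.card {p : {p : Fin n × Fin n // p.1 < p.2} //
            G.2 p = some (x, x') ∨ G.2 p = some (x', x)} = m x x')}
      ≃ {f : Fin n → Fin J // ∀ θ, Nat.card {v : Fin n // f v = θ} = u θ}
        × {g : {p : Fin n × Fin n // p.1 < p.2} → Option (Fin K × Fin K) //
            ∀ ℓ, Nat.card {p : {p : Fin n × Fin n // p.1 < p.2} // lab (g p) = ℓ} = c ℓ} :=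
    (Equiv.subtypeEquivRight (fun (G : (Fin n → Fin J) ×
        ({p : Fin n × Fin n // p.1 < p.2} → Option (Fin K × Fin K))) =>
      and_congr Iff.rfl (hBiff G.2))).trans (Equiv.subtypeProdEquivProd
        (p := fun f : Fin n → Fin J => ∀ θ, Nat.card {v : Fin n // f v = θ} = u θ)
        (q := fun g : {p : Fin n × Fin n // p.1 < p.2} → Option (Fin K × Fin K) =>
          ∀ ℓ, Nat.card {p : {p : Fin n × Fin n // p.1 < p.2} // lab (g p) = ℓ} = c ℓ))
  rw [Nat.card_congr e1, Nat.card_prod]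
  -- vertex count
  have hA := count_fun_fibers (α := Fin n) (L := Fin J) u (by rw [Fintype.card_fin, hu])
  rw [Fintype.card_fin] at hA
  -- edge count
  have hB := count_labelled (S := {p : Fin n × Fin n // p.1 < p.2}) lab c hsum_c
  rw [hcardE] at hB
  -- compute the factorial product over labels
  have hfact : ∏ ℓ, (c ℓ).factorial
      = (∏ p ∈ univ.filter (fun p : Fin K × Fin K => p.1 ≤ p.2), (m p.1 p.2).factorial) *
        (n.choose 2 - Sm).factorial := by
    rw [Fintype.prod_option]
    simp only [hc, Option.elim]
    rw [← Finset.prod_subtype (univ.filter (fun p : Fin K × Fin K => p.1 ≤ p.2))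
      (fun p => by simp) (fun p => (m p.1 p.2).factorial)]
    ring
  -- compute the fiber size product
  have hpow : ∏ ℓ, (Nat.card {v : Option (Fin K × Fin K) // lab v = ℓ}) ^ (c ℓ)
      = 2 ^ (∑ p ∈ univ.filter (fun p : Fin K × Fin K => p.1 < p.2), m p.1 p.2) := by
    rw [Fintype.prod_option]
    have h1 : (Nat.card {v : Option (Fin K × Fin K) // lab v = none}) ^ (c none) = 1 := by
      rw [Nat.card_congr (Equiv.subtypeEquivRight (fun v => lab_eq_none v)),
        Nat.card_eq_fintype_card, Fintype.card_subtype_eq, one_pow]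
    rw [h1, one_mul]
    have h2 : ∀ q : {q : Fin K × Fin K // q.1 ≤ q.2},
        (Nat.card {v : Option (Fin K × Fin K) // lab v = some q}) ^ (c (some q))
          = (if q.1.1 = q.1.2 then 1 else 2) ^ (m q.1.1 q.1.2) := by
      intro q
      rw [labcard]
      simp [hc]
    rw [Finset.prod_congr rfl (fun q _ => h2 q),
      ← Finset.prod_subtype (univ.filter (fun p : Fin K × Fin K => p.1 ≤ p.2))
        (fun p => by simp) (fun p => (if p.1 = p.2 then 1 else 2) ^ (m p.1 p.2)),
      ← Finset.prod_filter_mul_prod_filter_not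
        (univ.filter (fun p : Fin K × Fin K => p.1 ≤ p.2)) (fun p => p.1 < p.2)]
    have hs1 : (univ.filter (fun p : Fin K × Fin K => p.1 ≤ p.2)).filter
        (fun p => p.1 < p.2) = univ.filter (fun p : Fin K × Fin K => p.1 < p.2) := by
      ext p
      simp only [Finset.mem_filter, Finset.mem_univ, true_and]
      exact ⟨fun h => h.2, fun h => ⟨le_of_lt h, h⟩⟩
    rw [hs1]
    have hs2 : ∏ p ∈ (univ.filter (fun p : Fin K × Fin K => p.1 ≤ p.2)).filter
        (fun p => ¬ p.1 < p.2), (if p.1 = p.2 then 1 else 2) ^ (m p.1 p.2) = 1 := by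
      refine Finset.prod_eq_one fun p hp => ?_
      simp only [Finset.mem_filter, Finset.mem_univ, true_and] at hp
      rw [if_pos (le_antisymm hp.1 (not_lt.1 hp.2)), one_pow]
    rw [hs2, mul_one]
    rw [Finset.prod_congr rfl (fun p hp => ?_), Finset.prod_pow_eq_pow_sum]
    simp only [Finset.mem_filter, Finset.mem_univ, true_and] at hp
    rw [if_neg (ne_of_lt hp)]
  rw [hpow] at hB
  -- assemble
  calc Nat.card {f : Fin n → Fin J // ∀ θ, Nat.card {v : Fin n // f v = θ} = u θ} *
        Nat.card {g : {p : Fin n × Fin n // p.1 < p.2} → Option (Fin K × Fin K) //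
          ∀ ℓ, Nat.card {p : {p : Fin n × Fin n // p.1 < p.2} // lab (g p) = ℓ} = c ℓ} *
        ((∏ θ, (u θ).factorial) *
          (∏ p ∈ univ.filter (fun p : Fin K × Fin K => p.1 ≤ p.2), (m p.1 p.2).factorial) *
          (n.choose 2 - Sm).factorial)
      = (Nat.card {f : Fin n → Fin J // ∀ θ, Nat.card {v : Fin n // f v = θ} = u θ} *
          ∏ θ, (u θ).factorial) *
        (Nat.card {g : {p : Fin n × Fin n // p.1 < p.2} → Option (Fin K × Fin K) //
          ∀ ℓ, Nat.card {p : {p : Fin n × Fin n // p.1 < p.2} // lab (g p) = ℓ} = c ℓ} *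
          ((∏ p ∈ univ.filter (fun p : Fin K × Fin K => p.1 ≤ p.2), (m p.1 p.2).factorial) *
          (n.choose 2 - Sm).factorial)) := by ring
    _ = n.factorial * ((n.choose 2).factorial *
          2 ^ (∑ p ∈ univ.filter (fun p : Fin K × Fin K => p.1 < p.2), m p.1 p.2)) := by
        rw [hA, ← hfact, hB]
    _ = _ := by ring
end
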